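/- For the Plebański–Demiański metric with null geodesics in the plane cosθ = −l/a satisfying (a² − 2alC + l²)E = aL_z, the separated radial and angular equations of motion reduce to (Σ ṙ)² = E²r⁴ and (Σ θ̇-equation) (Σ·(dθ/dλ))²·(appropriately expressed as a function of cosθ) = −E²(l + a cosθ)⁴/a²; in particular the right-hand side of the angular equation is nonpositive and vanishes exactly when cosθ = −l/a, so motion is confined to the plane cosθ = −l/a. -/

import Mathlib

/-- The separated radial function `Ξ¹(r) = Δ_r (f κ − R^{ij} pᵢpⱼ − K)` for the
Plebański–Demiański metric with `κ = 0`, `K = 0`, `p₀ = −E`, `p₃ = L_z`. -/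
noncomputable def PDXi1 (m a l C Q E Lz r : ℝ) : ℝ :=
  (r ^ 2 - 2 * m * r + a ^ 2 - l ^ 2 + Q ^ 2) *
    (0 - (-((r ^ 2 + a ^ 2 + l ^ 2 - 2 * a * l * C) ^ 2) * E ^ 2
            + 2 * a * (r ^ 2 + a ^ 2 + l ^ 2 - 2 * a * l * C) * E * Lz
            - a ^ 2 * Lz ^ 2) / (r ^ 2 - 2 * m * r + a ^ 2 - l ^ 2 + Q ^ 2)
       - 0)

/-- The separated angular function `Ξ²(θ) = Θ²² (K + h κ − Θ^{ij} pᵢpⱼ)` for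
the Plebański–Demiański metric with `κ = 0`, `K = 0`, `Θ²² = 1`. -/
noncomputable def PDXi2 (a l C E Lz θ : ℝ) : ℝ :=
  0 + 0 - ((a * Real.sin θ ^ 2 - 2 * l * (Real.cos θ + C)) * E - Lz) ^ 2
      / Real.sin θ ^ 2

/-- Equation (32): for null geodesics with `K = 0` and
`(a² − 2alC + l²) E = a L_z`, the separated equations of motion reduce to
`(Σ ṙ)² = Ξ¹ = E² r⁴` and `sin²θ · Ξ² = −E² (l + a cos θ)⁴ / a²`; the angular
right-hand side is nonpositive and (for `E ≠ 0`) vanishes exactly when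
`cos θ = −l/a`, so motion is confined to that plane. -/
theorem PD_null_ray_equations (m a l C Q E Lz : ℝ) (ha : a ≠ 0)
    (hE : (a ^ 2 - 2 * a * l * C + l ^ 2) * E = a * Lz) :
    (∀ r : ℝ, r ^ 2 - 2 * m * r + a ^ 2 - l ^ 2 + Q ^ 2 ≠ 0 →
        PDXi1 m a l C Q E Lz r = E ^ 2 * r ^ 4) ∧
    (∀ θ : ℝ, Real.sin θ ≠ 0 →
        Real.sin θ ^ 2 * PDXi2 a l C E Lz θ =
          -(E ^ 2 * (l + a * Real.cos θ) ^ 4) / a ^ 2) ∧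
    (∀ θ : ℝ, -(E ^ 2 * (l + a * Real.cos θ) ^ 4) / a ^ 2 ≤ 0) ∧
    (E ≠ 0 → ∀ θ : ℝ,
        (-(E ^ 2 * (l + a * Real.cos θ) ^ 4) / a ^ 2 = 0 ↔
          l + a * Real.cos θ = 0)) := by
  have hLz : Lz = (a ^ 2 - 2 * a * l * C + l ^ 2) * E / a := by
    field_simp
    linear_combination (-1 : ℝ) * hE
  subst hLz
  refine ⟨?_, ?_, ?_, ?_⟩
  · intro r hr
    unfold PDXi1
    rw [sub_zero, zero_sub, mul_neg, mul_div_cancel₀ _ hr]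
    field_simp
    ring
  · intro θ hθ
    unfold PDXi2
    have hs : Real.sin θ ^ 2 = 1 - Real.cos θ ^ 2 := by
      nlinarith [Real.sin_sq_add_cos_sq θ]
    field_simp
    rw [hs]
    ring
  · intro θ
    apply div_nonpos_of_nonpos_of_nonneg
    · nlinarith [sq_nonneg (E * (l + a * Real.cos θ) ^ 2)]
    · positivity
  · intro hEne θ
    constructor
    · intro h
      have h2 : E ^ 2 * (l + a * Real.cos θ) ^ 4 = 0 := by
        field_simp at h
        linarith [h]
      rcases mul_eq_zero.mp h2 with h3 | h3
      · exact absurd (pow_eq_zero_iff (by norm_num) |>.mp h3) hEne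
      · exact pow_eq_zero_iff (by norm_num) |>.mp h3
    · intro h
      rw [h]
      simp
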